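/- For nonnegative integers m1 ≥ 1 and m2, the Humbert-Bessel function satisfies the recurrence m1 · I_{m1,m2}(x) = I_{m1-1,m2}(x) − x · I_{m1+1,m2+1}(x). -/
import Mathlib


/-- Two-index Humbert-Bessel function. -/
noncomputable def humbert (m1 m2 : ℕ) (x : ℝ) : ℝ :=
  ∑' r : ℕ, x ^ r / (r.factorial * (m1 + r).factorial * (m2 + r).factorial)

lemma humbert_summable (m1 m2 : ℕ) (x : ℝ) :
    Summable (fun r : ℕ =>
      x ^ r / (r.factorial * (m1 + r).factorial * (m2 + r).factorial)) := by
  apply Summable.of_norm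
  refine Summable.of_nonneg_of_le (fun r => norm_nonneg _) (fun r => ?_)
    (Real.summable_pow_div_factorial |x|)
  have hD : (0:ℝ) < (r.factorial : ℝ) * (m1 + r).factorial * (m2 + r).factorial := by
    positivity
  rw [norm_div, norm_pow, Real.norm_eq_abs x, Real.norm_eq_abs, abs_of_pos hD]
  have h1 : (1:ℝ) ≤ ((m1 + r).factorial : ℝ) := by
    exact_mod_cast Nat.one_le_iff_ne_zero.mpr (Nat.factorial_pos _).ne'
  have h2 : (1:ℝ) ≤ ((m2 + r).factorial : ℝ) := by
    exact_mod_cast Nat.one_le_iff_ne_zero.mpr (Nat.factorial_pos _).ne'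
  have h0 : (0:ℝ) < (r.factorial : ℝ) := by positivity
  gcongr
  nlinarith [mul_le_mul h1 h2 (by norm_num : (0:ℝ) ≤ 1) (le_trans zero_le_one h1)]

theorem humbert_recurrence (m1 m2 : ℕ) (hm1 : 1 ≤ m1) (x : ℝ) :
    (m1 : ℝ) * humbert m1 m2 x =
      humbert (m1 - 1) m2 x - x * humbert (m1 + 1) (m2 + 1) x := by
  obtain ⟨n, rfl⟩ : ∃ n, m1 = n + 1 := ⟨m1 - 1, (Nat.succ_pred_eq_of_pos hm1).symm⟩
  simp only [Nat.add_sub_cancel]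
  have hs1 := humbert_summable n m2 x
  have hs2 := humbert_summable (n + 1) m2 x
  have hd : Summable (fun r : ℕ =>
      x ^ r / (r.factorial * (n + r).factorial * (m2 + r).factorial) -
      ((n:ℝ) + 1) * (x ^ r / (r.factorial * (n + 1 + r).factorial * (m2 + r).factorial))) :=
    hs1.sub (hs2.mul_left _)
  have key : humbert n m2 x - ((n:ℝ) + 1) * humbert (n + 1) m2 x =
      x * humbert (n + 1 + 1) (m2 + 1) x := by
    have e1 : humbert n m2 x - ((n:ℝ) + 1) * humbert (n + 1) m2 x =
        ∑' r : ℕ, (x ^ r / (r.factorial * (n + r).factorial * (m2 + r).factorial) -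
          ((n:ℝ) + 1) * (x ^ r / (r.factorial * (n + 1 + r).factorial * (m2 + r).factorial))) := by
      rw [humbert, humbert, ← tsum_mul_left, ← Summable.tsum_sub hs1 (hs2.mul_left _)]
    rw [e1]
    have e2 : ∀ r : ℕ,
        x ^ r / (r.factorial * (n + r).factorial * (m2 + r).factorial) -
          ((n:ℝ) + 1) * (x ^ r / (r.factorial * (n + 1 + r).factorial * (m2 + r).factorial)) =
        (r : ℝ) * x ^ r / (r.factorial * (n + 1 + r).factorial * (m2 + r).factorial) := by
      intro r
      have hfac : ((n + 1 + r).factorial : ℝ) = ((n + 1 + r : ℕ) : ℝ) * (n + r).factorial := by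
        have : n + 1 + r = (n + r) + 1 := by ring
        rw [this, Nat.factorial_succ]
        push_cast
        ring
      have h1 : ((r.factorial : ℝ)) ≠ 0 := by positivity
      have h2 : (((n + r).factorial : ℝ)) ≠ 0 := by positivity
      have h3 : (((m2 + r).factorial : ℝ)) ≠ 0 := by positivity
      rw [hfac]
      push_cast
      field_simp
      ring
    rw [tsum_congr e2]
    have hd' : Summable (fun r : ℕ =>
        (r : ℝ) * x ^ r / (r.factorial * (n + 1 + r).factorial * (m2 + r).factorial)) := by
      have := hd
      simpa only [e2] using this
    rw [Summable.tsum_eq_zero_add hd']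
    simp only [Nat.cast_zero, zero_mul, zero_div, zero_add]
    rw [humbert, ← tsum_mul_left]
    apply tsum_congr
    intro s
    have hsf : ((s + 1).factorial : ℝ) = ((s:ℝ) + 1) * s.factorial := by
      rw [Nat.factorial_succ]; push_cast; ring
    have h1 : ((s.factorial : ℝ)) ≠ 0 := by positivity
    have h2 : (((n + 1 + 1 + s).factorial : ℝ)) ≠ 0 := by positivity
    have h3 : (((m2 + 1 + s).factorial : ℝ)) ≠ 0 := by positivity
    have hidx1 : n + 1 + (s + 1) = n + 1 + 1 + s := by ring
    have hidx2 : m2 + (s + 1) = m2 + 1 + s := by ring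
    rw [hidx1, hidx2, hsf]
    push_cast
    field_simp
    ring
  push_cast
  linarith [key]
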